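/- For all integers n ≥ 1 and k ≥ 1, the number of taxi walks of length kn satisfies c_{kn} ≥ b_n^k. -/

import Mathlib

open Filter

/-- The oriented step relation of the Manhattan lattice. -/
def taxiStep (u v : ℤ × ℤ) : Prop :=
  (Even u.2 ∧ v = (u.1 + 1, u.2)) ∨
  (Odd u.2 ∧ v = (u.1 - 1, u.2)) ∨
  (Even u.1 ∧ v = (u.1, u.2 + 1)) ∨
  (Odd u.1 ∧ v = (u.1, u.2 - 1))

/-- Perpendicularity of two step vectors. -/
def perp (d e : ℤ × ℤ) : Prop := d.1 * e.1 + d.2 * e.2 = 0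

instance (d e : ℤ × ℤ) : Decidable (perp d e) := by unfold perp; infer_instance

/-- The walk `l` turns at its `i`-th vertex (meaningful for `1 ≤ i ≤ l.length - 2`). -/
def turnAt (l : List (ℤ × ℤ)) (i : ℕ) : Prop :=
  perp (l.getD i 0 - l.getD (i - 1) 0) (l.getD (i + 1) 0 - l.getD i 0)

instance (l : List (ℤ × ℤ)) (i : ℕ) : Decidable (turnAt l i) := by
  unfold turnAt; infer_instance

/-- A taxi walk, recorded as its list of vertices (a walk of length `n` has `n + 1` vertices). -/
def IsTaxiWalk (l : List (ℤ × ℤ)) : Prop :=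
  l ≠ [] ∧ l.Nodup ∧
  (∀ i, i + 1 < l.length → taxiStep (l.getD i 0) (l.getD (i + 1) 0)) ∧
  (∀ i, 1 ≤ i → i + 2 < l.length → ¬(turnAt l i ∧ turnAt l (i + 1)))

/-- The set of taxi walks of length `n` starting at the origin. -/
def originWalks (n : ℕ) : Set (List (ℤ × ℤ)) :=
  {l | IsTaxiWalk l ∧ l.length = n + 1 ∧ l.getD 0 0 = 0}

/-- `taxiCount n` is `c_n`, the number of taxi walks of length `n` starting at the origin. -/
noncomputable def taxiCount (n : ℕ) : ℕ := (originWalks n).ncard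

/-- The turn-word of a walk: `true` (the letter `t`) where the walk turns,
`false` (the letter `s`) where it goes straight. -/
def turnWord (l : List (ℤ × ℤ)) : List Bool :=
  (List.range (l.length - 2)).map fun i => decide (turnAt l (i + 1))

/-- The encoding of a taxi walk starting at the origin: the first coordinate is `true`
(for `N`) if `v₁ = (0,1)` and `false` (for `E`) if `v₁ = (1,0)`; the second is the turn-word. -/
def encode (l : List (ℤ × ℤ)) : Bool × List Bool :=
  (decide (l.getD 1 0 = (0, 1)), turnWord l)

/-- A bridge: a taxi walk from `(0,0)` to `(1,0)` staying at abscissa `≥ 1` after the start,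
whose last step is horizontal and ends at maximal abscissa. -/
def IsBridge (l : List (ℤ × ℤ)) : Prop :=
  IsTaxiWalk l ∧ 2 ≤ l.length ∧ l.getD 0 0 = (0, 0) ∧ l.getD 1 0 = (1, 0) ∧
  (∀ i, 1 ≤ i → i < l.length → 1 ≤ (l.getD i 0).1) ∧
  (l.getD (l.length - 1) 0).2 = (l.getD (l.length - 2) 0).2 ∧
  (∀ i, i < l.length → (l.getD i 0).1 ≤ (l.getD (l.length - 1) 0).1)

/-- `bridgeCount n` is `b_n`, the number of bridges of length `n`, with `b_0 = 1`. -/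
noncomputable def bridgeCount : ℕ → ℕ
  | 0 => 1
  | n + 1 => {l : List (ℤ × ℤ) | IsBridge l ∧ l.length = n + 2}.ncard

/-- The normalizing symmetry `f_{(x,y)}` of the oriented Manhattan lattice. -/
def normMap (p : ℤ × ℤ) (q : ℤ × ℤ) : ℤ × ℤ :=
  if Even p.1 then
    (if Even p.2 then (q.1 - p.1, q.2 - p.2) else (-(q.1 - p.1), q.2 - p.2))
  else
    (if Even p.2 then (q.1 - p.1, -(q.2 - p.2)) else (-(q.1 - p.1), -(q.2 - p.2)))

/-- The vertex `v_i` is a cutvertex of the bridge `l`. -/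
def IsCutAt (l : List (ℤ × ℤ)) (i : ℕ) : Prop :=
  0 < i ∧ i + 1 < l.length ∧
  IsBridge (l.take (i + 1)) ∧
  l.getD (i + 1) 0 = l.getD i 0 + (1, 0) ∧
  IsBridge ((l.drop i).map (normMap (l.getD i 0)))

/-- An irreducible bridge: a bridge with no cutvertex. -/
def IsIrreducibleBridge (l : List (ℤ × ℤ)) : Prop :=
  IsBridge l ∧ ∀ i, ¬ IsCutAt l i

/-- `irrBridgeCount n` is `a_n`, the number of irreducible bridges of length `n`, with `a_0 = 0`. -/
noncomputable def irrBridgeCount : ℕ → ℕ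
  | 0 => 0
  | n + 1 => {l : List (ℤ × ℤ) | IsIrreducibleBridge l ∧ l.length = n + 2}.ncard

def gMap (p q : ℤ × ℤ) : ℤ × ℤ :=
  (p.1 + q.1, p.2 + (if Even p.1 then q.2 else -q.2))

lemma gMap_injective (p : ℤ × ℤ) : Function.Injective (gMap p) := by
  intro u v h
  simp only [gMap, Prod.mk.injEq] at h
  obtain ⟨h1, h2⟩ := h
  split_ifs at h2 <;> exact Prod.ext (by linarith) (by linarith)

lemma gMap_zero (p : ℤ × ℤ) : gMap p ((0 : ℤ), (0 : ℤ)) = p := by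
  simp [gMap]

lemma gMap_fst (p q : ℤ × ℤ) : (gMap p q).1 = p.1 + q.1 := rfl

lemma gMap_snd_even {p u : ℤ × ℤ} (hp : Even p.2) : Even (gMap p u).2 ↔ Even u.2 := by
  unfold gMap
  split_ifs <;> simp [Int.even_add, hp, even_neg]

lemma gMap_fst_even {p u : ℤ × ℤ} : Even (gMap p u).1 ↔ (Even p.1 ↔ Even u.1) := by
  simp [gMap_fst, Int.even_add]

lemma taxiStep_gMap {p u v : ℤ × ℤ} (hp : Even p.2) (h : taxiStep u v) :
    taxiStep (gMap p u) (gMap p v) := by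
  rcases h with ⟨h1, rfl⟩ | ⟨h1, rfl⟩ | ⟨h1, rfl⟩ | ⟨h1, rfl⟩
  · refine Or.inl ⟨(gMap_snd_even hp).2 h1, ?_⟩
    simp [gMap, Prod.ext_iff]; ring
  · refine Or.inr (Or.inl ⟨?_, ?_⟩)
    · rw [← Int.not_even_iff_odd] at h1 ⊢
      simp [gMap_snd_even hp, h1]
    · simp [gMap, Prod.ext_iff]; ring
  · by_cases hq : Even p.1
    · refine Or.inr (Or.inr (Or.inl ⟨?_, ?_⟩))
      · simp [gMap_fst_even, hq, h1]
      · simp [gMap, Prod.ext_iff, hq]; ring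
    · refine Or.inr (Or.inr (Or.inr ⟨?_, ?_⟩))
      · rw [← Int.not_even_iff_odd]
        simp [gMap_fst_even, hq, h1]
      · simp [gMap, Prod.ext_iff, hq]; ring
  · rw [← Int.not_even_iff_odd] at h1
    by_cases hq : Even p.1
    · refine Or.inr (Or.inr (Or.inr ⟨?_, ?_⟩))
      · rw [← Int.not_even_iff_odd]
        simp [gMap_fst_even, hq, h1]
      · simp [gMap, Prod.ext_iff, hq]; ring
    · refine Or.inr (Or.inr (Or.inl ⟨?_, ?_⟩))
      · simp [gMap_fst_even, hq, h1]
      · simp [gMap, Prod.ext_iff, hq]; ring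

lemma perp_gMap {p u v w : ℤ × ℤ} :
    perp (gMap p v - gMap p u) (gMap p w - gMap p v) ↔ perp (v - u) (w - v) := by
  simp only [perp, gMap, Prod.fst_sub, Prod.snd_sub]
  split_ifs <;> constructor <;> intro h <;> linear_combination h
lemma mem_getD {l : List (ℤ × ℤ)} {a : ℤ × ℤ} (h : a ∈ l) :
    ∃ i, i < l.length ∧ l.getD i 0 = a := by
  obtain ⟨i, hi, rfl⟩ := List.mem_iff_getElem.1 h
  exact ⟨i, hi, List.getD_eq_getElem _ _ hi⟩

lemma getD_mem {l : List (ℤ × ℤ)} {i : ℕ} (h : i < l.length) : l.getD i 0 ∈ l := by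
  rw [List.getD_eq_getElem _ _ h]; exact List.getElem_mem h

lemma getD_drop_map (l' : List (ℤ × ℤ)) (g : ℤ × ℤ → ℤ × ℤ) {j : ℕ}
    (h1 : 1 ≤ j) (h2 : j < l'.length) :
    ((l'.drop 1).map g).getD (j - 1) 0 = g (l'.getD j 0) := by
  obtain ⟨i', rfl⟩ : ∃ i', j = i' + 1 := ⟨j - 1, by omega⟩
  have hlen : i' + 1 - 1 < ((l'.drop 1).map g).length := by
    simp only [List.length_map, List.length_drop]; omega
  rw [List.getD_eq_getElem _ _ hlen, List.getD_eq_getElem _ _ h2]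
  simp only [List.getElem_map, List.getElem_drop]
  simp [Nat.add_comm]
lemma bridge_last {l : List (ℤ × ℤ)} {m : ℕ} (hl : IsBridge l) (hml : l.length = m + 1)
    (hm : 1 ≤ m) :
    l.getD m 0 = l.getD (m - 1) 0 + ((1:ℤ), (0:ℤ)) ∧ Even (l.getD m 0).2 := by
  obtain ⟨⟨-, -, hsteps, -⟩, -, -, -, -, hhor, hmax⟩ := hl
  have hstep := hsteps (m - 1) (by omega)
  rw [show m - 1 + 1 = m by omega] at hstep
  rw [hml, show m + 1 - 1 = m by omega, show m + 1 - 2 = m - 1 by omega] at hhor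
  have hmax' := hmax (m - 1) (by omega)
  rw [hml, show m + 1 - 1 = m by omega] at hmax'
  rcases hstep with ⟨h1, h2⟩ | ⟨h1, h2⟩ | ⟨h1, h2⟩ | ⟨h1, h2⟩
  · refine ⟨?_, by rw [h2]; exact h1⟩
    rw [h2, Prod.ext_iff]
    constructor <;> simp
  · exfalso; rw [h2] at hmax'; simp at hmax'
  · exfalso; rw [h2] at hhor; simp at hhor
  · exfalso; rw [h2] at hhor; simp at hhor

/-- Concatenation of two bridges. -/
def catW (l l' : List (ℤ × ℤ)) : List (ℤ × ℤ) :=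
  l ++ (l'.drop 1).map (gMap (l.getD (l.length - 1) 0))

lemma catW_spec {m n : ℕ} (hm : 1 ≤ m) (hn : 1 ≤ n) {l l' : List (ℤ × ℤ)}
    (hl : IsBridge l) (hl' : IsBridge l')
    (hml : l.length = m + 1) (hnl : l'.length = n + 1) :
    IsBridge (catW l l') ∧ (catW l l').length = m + n + 1 := by
  obtain ⟨hlast, hpeven⟩ := bridge_last hl hml hm
  obtain ⟨⟨hne, hnd, hsteps, hturns⟩, hlen2, h0, h1, hx1, hhor, hmax⟩ := hl
  obtain ⟨⟨hne', hnd', hsteps', hturns'⟩, hlen2', h0', h1', hx1', hhor', hmax'⟩ := hl'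
  set p : ℤ × ℤ := l.getD m 0 with hp
  have hw : catW l l' = l ++ (l'.drop 1).map (gMap p) := by
    unfold catW
    rw [hml, Nat.add_sub_cancel]
  set t : List (ℤ × ℤ) := (l'.drop 1).map (gMap p) with ht
  have htlen : t.length = n := by
    rw [ht]; simp [List.length_map, List.length_drop, hnl]
  have hwlen : (l ++ t).length = m + n + 1 := by
    rw [List.length_append, hml, htlen]; omega
  have hmaxm : ∀ i ≤ m, (l.getD i 0).1 ≤ p.1 := by
    intro i hi
    have := hmax i (by omega)
    rwa [hml, show m + 1 - 1 = m by omega, ← hp] at this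
  rw [hnl, show n + 1 - 1 = n by omega, show n + 1 - 2 = n - 1 by omega] at hhor'
  have hmaxn : ∀ j ≤ n, (l'.getD j 0).1 ≤ (l'.getD n 0).1 := by
    intro j hj
    have := hmax' j (by omega)
    rwa [hnl, show n + 1 - 1 = n by omega] at this
  have hp1 : 1 ≤ p.1 := by rw [hp]; exact hx1 m hm (by omega)
  have hwl : ∀ i ≤ m, (l ++ t).getD i 0 = l.getD i 0 := by
    intro i hi; exact List.getD_append _ _ _ _ (by omega)
  have hwr : ∀ j ≤ n, (l ++ t).getD (m + j) 0 = gMap p (l'.getD j 0) := by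
    intro j hj
    rcases Nat.eq_zero_or_pos j with rfl | hj1
    · rw [Nat.add_zero, hwl m le_rfl, h0', gMap_zero, hp]
    · rw [List.getD_append_right _ _ _ _ (by omega), hml,
        show m + j - (m + 1) = j - 1 by omega, ht,
        getD_drop_map _ _ hj1 (by omega)]
  -- the taxi-walk structure
  have wne : l ++ t ≠ [] := by
    intro h
    have := congrArg List.length h
    rw [hwlen] at this
    simp at this
  have wnd : (l ++ t).Nodup := by
    have htmem : ∀ b ∈ t, p.1 + 1 ≤ b.1 := by
      intro b hb
      obtain ⟨i, hi, hieq⟩ := mem_getD hb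
      rw [htlen] at hi
      rw [show i = (i + 1) - 1 by omega, ht, getD_drop_map _ _ (by omega) (by omega)] at hieq
      rw [← hieq, gMap_fst]
      have := hx1' (i + 1) (by omega) (by omega)
      omega
    have hlmem : ∀ a ∈ l, a.1 ≤ p.1 := by
      intro a ha
      obtain ⟨i, hi, hieq⟩ := mem_getD ha
      rw [← hieq]; exact hmaxm i (by omega)
    refine hnd.append ?_ ?_
    · exact ((List.drop_sublist 1 l').nodup hnd').map (gMap_injective p)
    · intro a ha hat
      have := hlmem a ha
      have := htmem a hat
      omega
  have wsteps : ∀ i, i + 1 < (l ++ t).length → taxiStep ((l ++ t).getD i 0) ((l ++ t).getD (i + 1) 0) := by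
    intro i hi
    rw [hwlen] at hi
    rcases le_or_gt (i + 1) m with hile | hile
    · rw [hwl i (by omega), hwl (i + 1) hile]
      exact hsteps i (by omega)
    · obtain ⟨j, rfl⟩ : ∃ j, i = m + j := ⟨i - m, by omega⟩
      rw [Nat.add_assoc, hwr j (by omega), hwr (j + 1) (by omega)]
      exact taxiStep_gMap hpeven (hsteps' j (by omega))
  have hT1 : ∀ i, 1 ≤ i → i + 1 ≤ m → (turnAt (l ++ t) i ↔ turnAt l i) := by
    intro i hi1 hi2
    simp only [turnAt]
    rw [hwl (i - 1) (by omega), hwl i (by omega), hwl (i + 1) (by omega)]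
  have hTm : ¬ turnAt (l ++ t) m := by
    simp only [turnAt]
    have hg1 : gMap p ((1:ℤ), (0:ℤ)) = (p.1 + 1, p.2) := by
      simp [gMap, Prod.ext_iff]
    rw [hwl (m - 1) (by omega), hwl m le_rfl,
      show m + 1 = m + (0 + 1) by omega, hwr (0 + 1) (by omega), h1', hg1, ← hp, hlast]
    simp [perp, Prod.ext_iff]
  have hT3 : ∀ j, 1 ≤ j → j + 1 ≤ n → (turnAt (l ++ t) (m + j) ↔ turnAt l' j) := by
    intro j hj1 hj2
    simp only [turnAt]
    rw [show m + j - 1 = m + (j - 1) by omega, hwr (j - 1) (by omega),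
      hwr j (by omega), show m + j + 1 = m + (j + 1) by omega, hwr (j + 1) (by omega)]
    exact perp_gMap
  have wturns : ∀ i, 1 ≤ i → i + 2 < (l ++ t).length →
      ¬(turnAt (l ++ t) i ∧ turnAt (l ++ t) (i + 1)) := by
    intro i hi1 hi2 ⟨ha, hb⟩
    rw [hwlen] at hi2
    rcases lt_trichotomy (i + 1) m with hc | hc | hc
    · exact hturns i hi1 (by omega)
        ⟨(hT1 i hi1 (by omega)).1 ha, (hT1 (i + 1) (by omega) (by omega)).1 hb⟩
    · rw [show i + 1 = m from hc] at hb; exact hTm hb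
    · rcases eq_or_lt_of_le (by omega : m ≤ i) with hc' | hc'
      · rw [← hc'] at ha
        exact hTm ha
      · obtain ⟨j, rfl⟩ : ∃ j, i = m + j := ⟨i - m, by omega⟩
        have hj1 : 1 ≤ j := by omega
        rw [Nat.add_assoc] at hb
        exact hturns' j hj1 (by omega)
          ⟨(hT3 j hj1 (by omega)).1 ha, (hT3 (j + 1) (by omega) (by omega)).1 hb⟩
  rw [hw]
  refine ⟨⟨⟨wne, wnd, wsteps, wturns⟩, ?_, ?_, ?_, ?_, ?_, ?_⟩, hwlen⟩
  · rw [hwlen]; omega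
  · rw [hwl 0 (by omega)]; exact h0
  · rw [hwl 1 hm]; exact h1
  · intro i hi1 hi2
    rw [hwlen] at hi2
    rcases le_or_gt i m with hile | hile
    · rw [hwl i hile]; exact hx1 i hi1 (by omega)
    · obtain ⟨j, rfl⟩ : ∃ j, i = m + j := ⟨i - m, by omega⟩
      rw [hwr j (by omega), gMap_fst]
      have := hx1' j (by omega) (by omega)
      omega
  · rw [hwlen, show m + n + 1 - 1 = m + n by omega,
      show m + n + 1 - 2 = m + (n - 1) by omega, hwr n le_rfl, hwr (n - 1) (by omega)]
    simp only [gMap]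
    split_ifs <;> rw [hhor']
  · intro i hi
    rw [hwlen] at hi
    rw [hwlen, show m + n + 1 - 1 = m + n by omega, hwr n le_rfl, gMap_fst]
    have hXn : 1 ≤ (l'.getD n 0).1 := hx1' n hn (by omega)
    rcases le_or_gt i m with hile | hile
    · rw [hwl i hile]
      have := hmaxm i hile
      omega
    · obtain ⟨j, rfl⟩ : ∃ j, i = m + j := ⟨i - m, by omega⟩
      rw [hwr j (by omega), gMap_fst]
      have := hmaxn j (by omega)
      omega
/-- The set of bridges of length `N`. -/
def Bset (N : ℕ) : Set (List (ℤ × ℤ)) := {l | IsBridge l ∧ l.length = N + 1}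

lemma bridgeCount_eq {N : ℕ} (h : 1 ≤ N) : bridgeCount N = (Bset N).ncard := by
  obtain ⟨M, rfl⟩ : ∃ M, N = M + 1 := ⟨N - 1, by omega⟩
  rfl

lemma walk_bound {l : List (ℤ × ℤ)} (h0 : l.getD 0 0 = 0)
    (hs : ∀ i, i + 1 < l.length → taxiStep (l.getD i 0) (l.getD (i + 1) 0)) :
    ∀ i, i < l.length → -(i:ℤ) ≤ (l.getD i 0).1 ∧ (l.getD i 0).1 ≤ i ∧
      -(i:ℤ) ≤ (l.getD i 0).2 ∧ (l.getD i 0).2 ≤ i := by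
  intro i
  induction i with
  | zero => intro _; rw [h0]; simp
  | succ i ih =>
    intro hi
    obtain ⟨b1, b2, b3, b4⟩ := ih (by omega)
    rcases hs i (by omega) with ⟨-, h⟩ | ⟨-, h⟩ | ⟨-, h⟩ | ⟨-, h⟩ <;>
      rw [h] <;> dsimp only <;> push_cast <;> omega

lemma originWalks_finite (N : ℕ) : (originWalks N).Finite := by
  classical
  set K : Set (ℤ × ℤ) := Set.Icc ((-(N:ℤ), -(N:ℤ)) : ℤ × ℤ) ((N:ℤ), (N:ℤ)) with hK
  have hKfin : K.Finite := Set.finite_Icc _ _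
  have : Finite ↥K := hKfin.to_subtype
  refine Set.Finite.subset ((List.finite_length_eq ↥K (N+1)).image
    (fun f : List ↥K => f.map Subtype.val)) ?_
  rintro l ⟨⟨hne, hnd, hsteps, hturns⟩, hlen, h0⟩
  have hb := walk_bound h0 hsteps
  have hmem : ∀ a ∈ l, a ∈ K := by
    intro a ha
    obtain ⟨i, hi, rfl⟩ := mem_getD ha
    obtain ⟨b1, b2, b3, b4⟩ := hb i hi
    have hiN : (i:ℤ) ≤ (N:ℤ) := by
      have : i ≤ N := by omega
      exact_mod_cast this
    simp only [hK, Set.mem_Icc, Prod.le_def]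
    refine ⟨⟨by omega, by omega⟩, ⟨by omega, by omega⟩⟩
  refine ⟨l.attach.map (fun x => (⟨x.1, hmem x.1 x.2⟩ : ↥K)), ?_, ?_⟩
  · simp [hlen]
  · simp [List.map_map, Function.comp_def]
    exact List.attach_map_subtype_val l

lemma Bset_subset (N : ℕ) : Bset N ⊆ originWalks N := by
  rintro l ⟨hb, hlen⟩
  exact ⟨hb.1, hlen, by rw [hb.2.2.1]; rfl⟩

lemma Bset_finite (N : ℕ) : (Bset N).Finite := (originWalks_finite N).subset (Bset_subset N)

lemma bridge_mul {m n : ℕ} (hm : 1 ≤ m) (hn : 1 ≤ n) :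
    (Bset m).ncard * (Bset n).ncard ≤ (Bset (m + n)).ncard := by
  classical
  have hmapsTo : ∀ q ∈ Bset m ×ˢ Bset n,
      (fun q : List (ℤ × ℤ) × List (ℤ × ℤ) => catW q.1 q.2) q ∈ Bset (m + n) := by
    rintro ⟨a, b⟩ ⟨⟨hab, hal⟩, hbb, hbl⟩
    obtain ⟨hbr, hle⟩ := catW_spec hm hn hab hbb hal hbl
    exact ⟨hbr, hle⟩
  have hinj : Set.InjOn (fun q : List (ℤ × ℤ) × List (ℤ × ℤ) => catW q.1 q.2)
      (Bset m ×ˢ Bset n) := by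
    rintro ⟨a, b⟩ ⟨⟨hab, hal⟩, hbb, hbl⟩ ⟨c, d⟩ ⟨⟨hcb, hcl⟩, hdb, hdl⟩ h
    simp only [catW] at h
    obtain ⟨rfl, h2⟩ := List.append_inj h (by rw [hal, hcl])
    have h3 : b.drop 1 = d.drop 1 :=
      List.map_injective_iff.2 (gMap_injective _) h2
    have hb0 : b.getD 0 0 = ((0:ℤ), (0:ℤ)) := hbb.2.2.1
    have hd0 : d.getD 0 0 = ((0:ℤ), (0:ℤ)) := hdb.2.2.1
    cases b with
    | nil => exact absurd rfl hbb.1.1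
    | cons x xs =>
      cases d with
      | nil => exact absurd rfl hdb.1.1
      | cons y ys =>
        simp only [List.getD_cons_zero] at hb0 hd0
        simp only [List.drop_one, List.tail_cons] at h3
        simp only [Prod.mk.injEq, true_and]
        rw [hb0, hd0, h3]
  have hcard := Set.ncard_le_ncard_of_injOn _ hmapsTo hinj (Bset_finite (m + n))
  have hs : (Bset m ×ˢ Bset n).ncard = (Bset m).ncard * (Bset n).ncard := by
    rw [← Nat.card_coe_set_eq, ← Nat.card_coe_set_eq, ← Nat.card_coe_set_eq,
      Nat.card_congr (Equiv.Set.prod _ _), Nat.card_prod]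
  rwa [hs] at hcard

lemma bridge_pow {n : ℕ} (hn : 1 ≤ n) : ∀ k, 1 ≤ k →
    (Bset n).ncard ^ k ≤ (Bset (k * n)).ncard := by
  intro k
  induction k with
  | zero => intro h; exact absurd h (by omega)
  | succ k ih =>
    intro _
    rcases Nat.eq_zero_or_pos k with rfl | hk
    · norm_num
    · calc (Bset n).ncard ^ (k + 1) = (Bset n).ncard ^ k * (Bset n).ncard := pow_succ _ _
        _ ≤ (Bset (k * n)).ncard * (Bset n).ncard := Nat.mul_le_mul_right _ (ih hk)
        _ ≤ (Bset (k * n + n)).ncard := bridge_mul (Nat.mul_pos hk hn) hn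
        _ = (Bset ((k + 1) * n)).ncard := by rw [Nat.succ_mul]
/-- For all integers `n ≥ 1` and `k ≥ 1`, the number of taxi walks of
length `k·n` satisfies `c_{kn} ≥ b_n^k`. -/
theorem taxiCount_ge_bridgeCount_pow (n k : ℕ) (hn : 1 ≤ n) (hk : 1 ≤ k) :
    bridgeCount n ^ k ≤ taxiCount (k * n) := by
  have h2 := bridge_pow hn k hk
  have h3 : (Bset (k * n)).ncard ≤ taxiCount (k * n) :=
    Set.ncard_le_ncard (Bset_subset _) (originWalks_finite _)
  rw [bridgeCount_eq hn]
  exact le_trans h2 h3
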